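/- Define f : [0,∞)^2 → ℂ by f(t_1,t_2) := t_1·(t_2^2/2) − (t_1^2/2)·t_2. Then for all λ_1, λ_2 ∈ ℂ with Re λ_1 > 0 and Re λ_2 > 0 the 2-dimensional Laplace transform of f satisfies f̂(λ_1,λ_2) = (λ_1 − λ_2)/(λ_1^3 · λ_2^3). In particular f̂(k,k) = 0 for every k ∈ ℕ while f is not zero almost everywhere, so the sequence ((k,k))_{k∈ℕ} is NOT a uniqueness sequence for the 2-dimensional Laplace transform. -/

import Mathlib

open MeasureTheory Filter Set

noncomputable section

/-- Partial Laplace integral of `f : [0,∞) → ℂ` at `l` up to time `t`. -/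
def lapPartial (f : ℝ → ℂ) (l : ℂ) (t : ℝ) : ℂ :=
  ∫ s in Set.Ioc (0:ℝ) t, Complex.exp (-(l * s)) * f s

/-- The Laplace transform of `f` at `l` exists and equals `F`. -/
def HasLaplace (f : ℝ → ℂ) (l : ℂ) (F : ℂ) : Prop :=
  Filter.Tendsto (lapPartial f l) Filter.atTop (nhds F)

/-- The abscissa of convergence of the Laplace transform of `f`, as an extended real. -/
def laplaceAbs (f : ℝ → ℂ) : EReal :=
  sInf {x : EReal | ∃ ω : ℝ, x = (ω : EReal) ∧ ∀ l : ℂ, ω < l.re → ∃ F, HasLaplace f l F}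

/-- `lam` is a uniqueness sequence for the one-dimensional Laplace transform. -/
def IsUniquenessSeq (lam : ℕ → ℂ) : Prop :=
  ∀ f : ℝ → ℂ, MeasureTheory.LocallyIntegrableOn f (Set.Ici 0) →
    (∀ k, laplaceAbs f < (((lam k).re : ℝ) : EReal)) →
    (∀ k, HasLaplace f (lam k) 0) →
    ∀ᵐ t : ℝ, 0 ≤ t → f t = 0

/-- Partial `n`-dimensional Laplace integral of `f : [0,∞)^n → ℂ` at `l` over the box `[0,t]`. -/
def mLapPartial (n : ℕ) (f : (Fin n → ℝ) → ℂ) (l : Fin n → ℂ) (t : Fin n → ℝ) : ℂ :=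
  ∫ s in Set.pi Set.univ (fun i => Set.Ioc (0:ℝ) (t i)),
    Complex.exp (-(∑ i, l i * (s i))) * f s

/-- The `n`-dimensional Laplace transform of `f` at `l` exists (as the iterated limit
`t₁ → ∞, …, tₙ → ∞` of the partial integrals) and equals `F`. -/
def HasMLaplace (n : ℕ) (f : (Fin n → ℝ) → ℂ) (l : Fin n → ℂ) (F : ℂ) : Prop :=
  Filter.Tendsto (mLapPartial n f l) Filter.atTop (nhds F)

/-- `Ω(f)`: the region of convergence of the `n`-dimensional Laplace integral. -/
def mOmega (n : ℕ) (f : (Fin n → ℝ) → ℂ) : Set (Fin n → ℂ) :=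
  {l | ∃ F, HasMLaplace n f l F}

/-- `Ω_b(f)`: the set of `l` for which the partial Laplace integrals are bounded. -/
def mOmegaB (n : ℕ) (f : (Fin n → ℝ) → ℂ) : Set (Fin n → ℂ) :=
  {l | Bornology.IsBounded (mLapPartial n f l '' {t | ∀ i, 0 ≤ t i})}

/-- A countable family `lam : K → ℂⁿ` is a uniqueness sequence for the `n`-dimensional
Laplace transform. -/
def IsMUniquenessFamily (n : ℕ) {K : Type} [Countable K] (lam : K → Fin n → ℂ) : Prop :=
  ∀ f : (Fin n → ℝ) → ℂ,
    MeasureTheory.LocallyIntegrableOn f {t | ∀ i, 0 ≤ t i} →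
    (∃ ω : Fin n → EReal, (∀ j, ω j ≠ ⊤) ∧
      {l : Fin n → ℂ | ∀ j, ω j < (((l j).re : ℝ) : EReal)} ⊆ mOmegaB n f ∩ mOmega n f ∧
      ∀ k j, ω j < ((((lam k j).re : ℝ)) : EReal)) →
    (∀ k, HasMLaplace n f (lam k) 0) →
    ∀ᵐ t : Fin n → ℝ, (∀ i, 0 ≤ t i) → f t = 0



lemma algA (l x E : ℂ) (hl : l ≠ 0) :
    -(1/l) * E + -(x/l + 1/l^2) * (E * -(l*1)) = E * x := by
  field_simp
  ring

lemma algB (l x E : ℂ) (hl : l ≠ 0) :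
    -((2:ℕ)*x^(2-1)/(2*l) + 1/l^2) * E + -(x^2/(2*l)+x/l^2+1/l^3)*(E*-(l*1)) = E * (x^2/2) := by
  have h9 : l^9 * l⁻¹^9 = 1 := by rw [← mul_pow, mul_inv_cancel₀ hl, one_pow]
  norm_num
  field_simp
  ring

lemma hasDerivA (l : ℂ) (hl : l ≠ 0) (x : ℝ) :
    HasDerivAt (fun s : ℝ => -(((s:ℂ))/l + 1/l^2) * Complex.exp (-(l*s)))
      (Complex.exp (-(l*x)) * (x:ℂ)) x := by
  have h1 : HasDerivAt (fun z : ℂ => -(z/l + 1/l^2)) (-(1/l)) (x:ℂ) :=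
    (((hasDerivAt_id ((x:ℝ):ℂ)).div_const l).add_const (1/l^2)).neg
  have hd : HasDerivAt (fun z : ℂ => -(l*z)) (-(l*1)) (x:ℂ) :=
    ((hasDerivAt_id ((x:ℝ):ℂ)).const_mul l).neg
  have h2 : HasDerivAt (fun z : ℂ => Complex.exp (-(l*z)))
      (Complex.exp (-(l*(x:ℂ))) * -(l*1)) (x:ℂ) :=
    (Complex.hasDerivAt_exp _).comp _ hd
  have h := (h1.mul h2).comp_ofReal
  convert h using 1
  · rfl
  exact (algA l x _ hl).symm

lemma hasDerivB (l : ℂ) (hl : l ≠ 0) (x : ℝ) :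
    HasDerivAt (fun s : ℝ => -(((s:ℂ))^2/(2*l) + (s:ℂ)/l^2 + 1/l^3) * Complex.exp (-(l*s)))
      (Complex.exp (-(l*x)) * ((x:ℂ)^2/2)) x := by
  have h1 : HasDerivAt (fun z : ℂ => -(z^2/(2*l) + z/l^2 + 1/l^3))
      (-((2:ℕ)*(x:ℂ)^(2-1)/(2*l) + 1/l^2)) (x:ℂ) := by
    have hz : HasDerivAt (fun z : ℂ => z/l^2) (1/l^2) (x:ℂ) :=
      (hasDerivAt_id ((x:ℝ):ℂ)).div_const (l^2)
    exact ((((hasDerivAt_pow 2 ((x:ℝ):ℂ)).div_const (2*l)).add hz).add_const (1/l^3)).neg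
  have hd : HasDerivAt (fun z : ℂ => -(l*z)) (-(l*1)) (x:ℂ) :=
    ((hasDerivAt_id ((x:ℝ):ℂ)).const_mul l).neg
  have h2 : HasDerivAt (fun z : ℂ => Complex.exp (-(l*z)))
      (Complex.exp (-(l*(x:ℂ))) * -(l*1)) (x:ℂ) :=
    (Complex.hasDerivAt_exp _).comp _ hd
  have h := (h1.mul h2).comp_ofReal
  convert h using 1
  · rfl
  exact (algB l x _ hl).symm

lemma lapA (l : ℂ) (hl : l ≠ 0) {t : ℝ} (ht : 0 ≤ t) :
    ∫ s in Set.Ioc (0:ℝ) t, Complex.exp (-(l*s)) * (s:ℂ)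
      = 1/l^2 - ((t:ℂ)/l + 1/l^2) * Complex.exp (-(l*t)) := by
  rw [← intervalIntegral.integral_of_le ht,
    intervalIntegral.integral_eq_sub_of_hasDerivAt (fun x _ => hasDerivA l hl x)
      (by apply Continuous.intervalIntegrable; continuity)]
  simp
  ring

lemma lapB (l : ℂ) (hl : l ≠ 0) {t : ℝ} (ht : 0 ≤ t) :
    ∫ s in Set.Ioc (0:ℝ) t, Complex.exp (-(l*s)) * ((s:ℂ)^2/2)
      = 1/l^3 - ((t:ℂ)^2/(2*l) + (t:ℂ)/l^2 + 1/l^3) * Complex.exp (-(l*t)) := by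
  rw [← intervalIntegral.integral_of_le ht,
    intervalIntegral.integral_eq_sub_of_hasDerivAt (fun x _ => hasDerivB l hl x)
      (by apply Continuous.intervalIntegrable; continuity)]
  simp
  ring



lemma texp_tendsto (b : ℝ) (hb : 0 < b) (n : ℕ) :
    Tendsto (fun t : ℝ => t^n * Real.exp (-(b*t))) atTop (nhds 0) := by
  have h1 : Tendsto (fun t : ℝ => b * t) atTop atTop :=
    Tendsto.const_mul_atTop hb tendsto_id
  have h2 := (Real.tendsto_pow_mul_exp_neg_atTop_nhds_zero n).comp h1
  have h3 := h2.const_mul ((b^n)⁻¹)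
  rw [mul_zero] at h3
  refine h3.congr fun t => ?_
  have hbn : (b:ℝ)^n ≠ 0 := pow_ne_zero _ hb.ne'
  field_simp [Function.comp]
  simp only [Function.comp_apply]
  ring

lemma cexp_tendsto (l : ℂ) (hl : 0 < l.re) (n : ℕ) :
    Tendsto (fun t : ℝ => (t:ℂ)^n * Complex.exp (-(l*t))) atTop (nhds 0) := by
  rw [tendsto_zero_iff_norm_tendsto_zero]
  refine (texp_tendsto l.re hl n).congr' ?_
  filter_upwards [eventually_ge_atTop (0:ℝ)] with t ht
  simp [map_mul, Complex.norm_exp, Complex.mul_re, abs_of_nonneg ht]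

lemma texp_le1 {b t : ℝ} (hb : 0 < b) (ht : 0 ≤ t) : t * Real.exp (-(b*t)) ≤ 1/b := by
  rw [Real.exp_neg]
  have hE := Real.add_one_le_exp (b*t)
  have hEp : (0:ℝ) < Real.exp (b*t) := Real.exp_pos _
  rw [mul_inv_le_iff₀ hEp]
  rw [div_mul_eq_mul_div, le_div_iff₀ hb]
  nlinarith

lemma texp_le2 {b t : ℝ} (hb : 0 < b) (ht : 0 ≤ t) : t^2/2 * Real.exp (-(b*t)) ≤ 1/b^2 := by
  rw [Real.exp_neg]
  have hE := Real.quadratic_le_exp_of_nonneg (by positivity : (0:ℝ) ≤ b*t)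
  have hEp : (0:ℝ) < Real.exp (b*t) := Real.exp_pos _
  rw [mul_inv_le_iff₀ hEp]
  rw [div_mul_eq_mul_div, le_div_iff₀ (by positivity)]
  nlinarith
lemma ne_zero_of_re_pos' {l : ℂ} (hl : 0 < l.re) : l ≠ 0 := by
  intro h; rw [h] at hl; simp at hl

lemma tendstoA (l : ℂ) (hl : 0 < l.re) :
    Tendsto (fun t : ℝ => ∫ s in Set.Ioc (0:ℝ) t, Complex.exp (-(l*s)) * (s:ℂ))
      atTop (nhds (1/l^2)) := by
  have hl0 : l ≠ 0 := ne_zero_of_re_pos' hl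
  have base : Tendsto (fun t : ℝ => 1/l^2 - ((1/l) * ((t:ℂ)^1 * Complex.exp (-(l*t)))
        + (1/l^2) * ((t:ℂ)^0 * Complex.exp (-(l*t))))) atTop
      (nhds (1/l^2 - ((1/l) * 0 + (1/l^2) * 0))) :=
    tendsto_const_nhds.sub
      (((cexp_tendsto l hl 1).const_mul (1/l)).add ((cexp_tendsto l hl 0).const_mul (1/l^2)))
  rw [mul_zero, mul_zero, add_zero, sub_zero] at base
  refine base.congr' ?_
  filter_upwards [eventually_ge_atTop (0:ℝ)] with t ht
  rw [lapA l hl0 ht]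
  ring

lemma tendstoB (l : ℂ) (hl : 0 < l.re) :
    Tendsto (fun t : ℝ => ∫ s in Set.Ioc (0:ℝ) t, Complex.exp (-(l*s)) * ((s:ℂ)^2/2))
      atTop (nhds (1/l^3)) := by
  have hl0 : l ≠ 0 := ne_zero_of_re_pos' hl
  have base : Tendsto (fun t : ℝ => 1/l^3 - ((1/(2*l)) * ((t:ℂ)^2 * Complex.exp (-(l*t)))
        + (1/l^2) * ((t:ℂ)^1 * Complex.exp (-(l*t)))
        + (1/l^3) * ((t:ℂ)^0 * Complex.exp (-(l*t))))) atTop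
      (nhds (1/l^3 - ((1/(2*l)) * 0 + (1/l^2) * 0 + (1/l^3) * 0))) :=
    tendsto_const_nhds.sub
      ((((cexp_tendsto l hl 2).const_mul (1/(2*l))).add
        ((cexp_tendsto l hl 1).const_mul (1/l^2))).add
        ((cexp_tendsto l hl 0).const_mul (1/l^3)))
  rw [mul_zero, mul_zero, mul_zero, add_zero, add_zero, sub_zero] at base
  refine base.congr' ?_
  filter_upwards [eventually_ge_atTop (0:ℝ)] with t ht
  rw [lapB l hl0 ht]
  ring

lemma norm_cexp (l : ℂ) (t : ℝ) : ‖Complex.exp (-(l*t))‖ = Real.exp (-(l.re * t)) := by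
  simp [Complex.norm_exp, Complex.mul_re]

lemma normA_le (l : ℂ) (hl : 0 < l.re) {t : ℝ} (ht : 0 ≤ t) :
    ‖∫ s in Set.Ioc (0:ℝ) t, Complex.exp (-(l*s)) * (s:ℂ)‖
      ≤ 2/‖l‖^2 + 1/(l.re*‖l‖) := by
  have hl0 : l ≠ 0 := ne_zero_of_re_pos' hl
  have hc : 0 < ‖l‖ := norm_pos_iff.2 hl0
  rw [lapA l hl0 ht]
  have hE : (0:ℝ) ≤ Real.exp (-(l.re * t)) := (Real.exp_pos _).le
  have hE1 : Real.exp (-(l.re * t)) ≤ 1 := by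
    rw [Real.exp_le_one_iff]; nlinarith
  calc ‖1/l^2 - ((t:ℂ)/l + 1/l^2) * Complex.exp (-(l*t))‖
      ≤ ‖1/l^2‖ + ‖((t:ℂ)/l + 1/l^2) * Complex.exp (-(l*t))‖ := norm_sub_le _ _
    _ = 1/‖l‖^2 + ‖(t:ℂ)/l + 1/l^2‖ * Real.exp (-(l.re * t)) := by
        rw [norm_mul, norm_cexp]; simp
    _ ≤ 1/‖l‖^2 + (t/‖l‖ + 1/‖l‖^2) * Real.exp (-(l.re * t)) := by
        gcongr
        calc ‖(t:ℂ)/l + 1/l^2‖ ≤ ‖(t:ℂ)/l‖ + ‖(1:ℂ)/l^2‖ := norm_add_le _ _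
          _ = t/‖l‖ + 1/‖l‖^2 := by simp [abs_of_nonneg ht]
    _ = 1/‖l‖^2 + (t * Real.exp (-(l.re * t)))/‖l‖ + Real.exp (-(l.re * t))/‖l‖^2 := by ring
    _ ≤ 1/‖l‖^2 + (1/l.re)/‖l‖ + 1/‖l‖^2 := by
        gcongr
        · exact texp_le1 hl ht
    _ = 2/‖l‖^2 + 1/(l.re*‖l‖) := by field_simp; ring

lemma normB_le (l : ℂ) (hl : 0 < l.re) {t : ℝ} (ht : 0 ≤ t) :
    ‖∫ s in Set.Ioc (0:ℝ) t, Complex.exp (-(l*s)) * ((s:ℂ)^2/2)‖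
      ≤ 2/‖l‖^3 + 1/(l.re^2*‖l‖) + 1/(l.re*‖l‖^2) := by
  have hl0 : l ≠ 0 := ne_zero_of_re_pos' hl
  have hc : 0 < ‖l‖ := norm_pos_iff.2 hl0
  rw [lapB l hl0 ht]
  have hE : (0:ℝ) ≤ Real.exp (-(l.re * t)) := (Real.exp_pos _).le
  have hE1 : Real.exp (-(l.re * t)) ≤ 1 := by
    rw [Real.exp_le_one_iff]; nlinarith
  calc ‖1/l^3 - ((t:ℂ)^2/(2*l) + (t:ℂ)/l^2 + 1/l^3) * Complex.exp (-(l*t))‖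
      ≤ ‖1/l^3‖ + ‖((t:ℂ)^2/(2*l) + (t:ℂ)/l^2 + 1/l^3) * Complex.exp (-(l*t))‖ := norm_sub_le _ _
    _ = 1/‖l‖^3 + ‖(t:ℂ)^2/(2*l) + (t:ℂ)/l^2 + 1/l^3‖ * Real.exp (-(l.re * t)) := by
        rw [norm_mul, norm_cexp]; simp
    _ ≤ 1/‖l‖^3 + (t^2/(2*‖l‖) + t/‖l‖^2 + 1/‖l‖^3) * Real.exp (-(l.re * t)) := by
        gcongr
        calc ‖(t:ℂ)^2/(2*l) + (t:ℂ)/l^2 + 1/l^3‖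
            ≤ ‖(t:ℂ)^2/(2*l) + (t:ℂ)/l^2‖ + ‖(1:ℂ)/l^3‖ := norm_add_le _ _
          _ ≤ ‖(t:ℂ)^2/(2*l)‖ + ‖(t:ℂ)/l^2‖ + ‖(1:ℂ)/l^3‖ := by
              gcongr; exact norm_add_le _ _
          _ = t^2/(2*‖l‖) + t/‖l‖^2 + 1/‖l‖^3 := by
              simp [abs_of_nonneg ht, sq_abs]
    _ = 1/‖l‖^3 + (t^2/2 * Real.exp (-(l.re * t)))/‖l‖
          + (t * Real.exp (-(l.re * t)))/‖l‖^2 + Real.exp (-(l.re * t))/‖l‖^3 := by ring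
    _ ≤ 1/‖l‖^3 + (1/l.re^2)/‖l‖ + (1/l.re)/‖l‖^2 + 1/‖l‖^3 := by
        gcongr
        · exact texp_le2 hl ht
        · exact texp_le1 hl ht
    _ = 2/‖l‖^3 + 1/(l.re^2*‖l‖) + 1/(l.re*‖l‖^2) := by field_simp; ring


lemma mLap_eq (l1 l2 : ℂ) (t : Fin 2 → ℝ) :
    (∫ s in Set.pi Set.univ (fun i => Set.Ioc (0:ℝ) (t i)),
      Complex.exp (-(∑ i, (![l1,l2]) i * (s i))) * (((s 0)*(s 1)^2/2 - (s 0)^2/2*(s 1) : ℝ):ℂ))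
    = (∫ s in Set.Ioc (0:ℝ) (t 0), Complex.exp (-(l1*s)) * (s:ℂ))
        * (∫ s in Set.Ioc (0:ℝ) (t 1), Complex.exp (-(l2*s)) * ((s:ℂ)^2/2))
      - (∫ s in Set.Ioc (0:ℝ) (t 0), Complex.exp (-(l1*s)) * ((s:ℂ)^2/2))
        * (∫ s in Set.Ioc (0:ℝ) (t 1), Complex.exp (-(l2*s)) * (s:ℂ)) := by
  set g : ℝ × ℝ → ℂ := fun p =>
    (Complex.exp (-(l1*p.1)) * (p.1:ℂ)) * (Complex.exp (-(l2*p.2)) * ((p.2:ℂ)^2/2))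
    - (Complex.exp (-(l1*p.1)) * ((p.1:ℂ)^2/2)) * (Complex.exp (-(l2*p.2)) * (p.2:ℂ)) with hg
  have hpt : ∀ x : Fin 2 → ℝ,
      Complex.exp (-(∑ i, (![l1,l2]) i * (x i))) * (((x 0)*(x 1)^2/2 - (x 0)^2/2*(x 1) : ℝ):ℂ)
      = g (MeasurableEquiv.finTwoArrow x) := by
    intro x
    simp only [hg, Fin.sum_univ_two, Matrix.cons_val_zero, Matrix.cons_val_one, Matrix.head_cons,
      MeasurableEquiv.finTwoArrow_apply]
    rw [neg_add, Complex.exp_add]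
    push_cast
    ring
  have hpre : Set.pi Set.univ (fun i => Set.Ioc (0:ℝ) (t i))
      = MeasurableEquiv.finTwoArrow ⁻¹' ((Set.Ioc (0:ℝ) (t 0)) ×ˢ (Set.Ioc (0:ℝ) (t 1))) := by
    ext x
    simp [Fin.forall_fin_two]
  calc (∫ s in Set.pi Set.univ (fun i => Set.Ioc (0:ℝ) (t i)),
        Complex.exp (-(∑ i, (![l1,l2]) i * (s i))) * (((s 0)*(s 1)^2/2 - (s 0)^2/2*(s 1) : ℝ):ℂ))
      = ∫ x in MeasurableEquiv.finTwoArrow ⁻¹' ((Set.Ioc (0:ℝ) (t 0)) ×ˢ (Set.Ioc (0:ℝ) (t 1))),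
          g (MeasurableEquiv.finTwoArrow x) := by
        rw [← hpre]; exact setIntegral_congr_fun (MeasurableSet.univ_pi fun i => measurableSet_Ioc) fun x _ => hpt x
    _ = ∫ p in (Set.Ioc (0:ℝ) (t 0)) ×ˢ (Set.Ioc (0:ℝ) (t 1)), g p :=
        (volume_preserving_finTwoArrow ℝ).setIntegral_preimage_emb
          (MeasurableEquiv.measurableEmbedding _) g _
    _ = _ := by
        have hc1 : Continuous fun s:ℝ => Complex.exp (-(l1*(s:ℂ))) :=
          Complex.continuous_exp.comp ((continuous_const.mul Complex.continuous_ofReal).neg)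
        have hc2 : Continuous fun s:ℝ => Complex.exp (-(l2*(s:ℂ))) :=
          Complex.continuous_exp.comp ((continuous_const.mul Complex.continuous_ofReal).neg)
        have i1 : IntegrableOn (fun s:ℝ => Complex.exp (-(l1*s)) * (s:ℂ)) (Set.Ioc 0 (t 0)) :=
          Continuous.integrableOn_Ioc (hc1.mul Complex.continuous_ofReal)
        have i2 : IntegrableOn (fun s:ℝ => Complex.exp (-(l2*s)) * ((s:ℂ)^2/2)) (Set.Ioc 0 (t 1)) :=
          Continuous.integrableOn_Ioc (hc2.mul ((Complex.continuous_ofReal.pow 2).div_const 2))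
        have i3 : IntegrableOn (fun s:ℝ => Complex.exp (-(l1*s)) * ((s:ℂ)^2/2)) (Set.Ioc 0 (t 0)) :=
          Continuous.integrableOn_Ioc (hc1.mul ((Complex.continuous_ofReal.pow 2).div_const 2))
        have i4 : IntegrableOn (fun s:ℝ => Complex.exp (-(l2*s)) * (s:ℂ)) (Set.Ioc 0 (t 1)) :=
          Continuous.integrableOn_Ioc (hc2.mul Complex.continuous_ofReal)
        have j1 : IntegrableOn (fun p : ℝ×ℝ =>
            (Complex.exp (-(l1*p.1)) * (p.1:ℂ)) * (Complex.exp (-(l2*p.2)) * ((p.2:ℂ)^2/2)))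
            ((Set.Ioc (0:ℝ) (t 0)) ×ˢ (Set.Ioc (0:ℝ) (t 1))) := by
          rw [IntegrableOn, Measure.volume_eq_prod, ← Measure.prod_restrict]
          exact i1.mul_prod i2
        have j2 : IntegrableOn (fun p : ℝ×ℝ =>
            (Complex.exp (-(l1*p.1)) * ((p.1:ℂ)^2/2)) * (Complex.exp (-(l2*p.2)) * (p.2:ℂ)))
            ((Set.Ioc (0:ℝ) (t 0)) ×ˢ (Set.Ioc (0:ℝ) (t 1))) := by
          rw [IntegrableOn, Measure.volume_eq_prod, ← Measure.prod_restrict]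
          exact i3.mul_prod i4
        rw [hg]
        rw [integral_sub j1 j2]
        rw [Measure.volume_eq_prod]
        rw [setIntegral_prod_mul (μ := volume) (ν := volume)
            (fun s : ℝ => Complex.exp (-(l1*s)) * (s:ℂ))
            (fun s : ℝ => Complex.exp (-(l2*s)) * ((s:ℂ)^2/2)) (Set.Ioc 0 (t 0)) (Set.Ioc 0 (t 1)),
          setIntegral_prod_mul (μ := volume) (ν := volume)
            (fun s : ℝ => Complex.exp (-(l1*s)) * ((s:ℂ)^2/2))
            (fun s : ℝ => Complex.exp (-(l2*s)) * (s:ℂ)) (Set.Ioc 0 (t 0)) (Set.Ioc 0 (t 1))]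

lemma tendsto_eval (i : Fin 2) : Tendsto (fun t : Fin 2 → ℝ => t i) atTop atTop :=
  tendsto_atTop_atTop.2 fun b => ⟨fun _ => b, fun t ht => ht i⟩

theorem stmt12 (f : (Fin 2 → ℝ) → ℂ)
    (hf : ∀ t : Fin 2 → ℝ, f t = (((t 0) * (t 1) ^ 2 / 2 - (t 0) ^ 2 / 2 * (t 1) : ℝ) : ℂ)) :
    (∀ l1 l2 : ℂ, 0 < l1.re → 0 < l2.re →
        HasMLaplace 2 f ![l1, l2] ((l1 - l2) / (l1 ^ 3 * l2 ^ 3))) ∧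
    ¬ (∀ᵐ t : Fin 2 → ℝ, (∀ i, 0 ≤ t i) → f t = 0) ∧
    ¬ IsMUniquenessFamily 2 (fun (k : ℕ) (_ : Fin 2) => ((k : ℂ) + 1)) := by
  have hmain : ∀ l1 l2 : ℂ, 0 < l1.re → 0 < l2.re →
      HasMLaplace 2 f ![l1, l2] ((l1 - l2) / (l1 ^ 3 * l2 ^ 3)) := by
    intro l1 l2 h1 h2
    have hl10 : l1 ≠ 0 := ne_zero_of_re_pos' h1
    have hl20 : l2 ≠ 0 := ne_zero_of_re_pos' h2
    have base := (((tendstoA l1 h1).comp (tendsto_eval 0)).mul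
        ((tendstoB l2 h2).comp (tendsto_eval 1))).sub
      (((tendstoB l1 h1).comp (tendsto_eval 0)).mul
        ((tendstoA l2 h2).comp (tendsto_eval 1)))
    have hval : (1/l1^2) * (1/l2^3) - (1/l1^3) * (1/l2^2) = (l1 - l2)/(l1^3*l2^3) := by
      field_simp
    rw [HasMLaplace, ← hval]
    refine base.congr fun t => ?_
    unfold mLapPartial
    simp only [hf, Function.comp]
    exact (mLap_eq l1 l2 t).symm
  have hbdd : ∀ l1 l2 : ℂ, 0 < l1.re → 0 < l2.re →
      Bornology.IsBounded (mLapPartial 2 f ![l1,l2] '' {t : Fin 2 → ℝ | ∀ i, 0 ≤ t i}) := by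
    intro l1 l2 h1 h2
    rw [isBounded_iff_forall_norm_le]
    refine ⟨(2/‖l1‖^2 + 1/(l1.re*‖l1‖)) * (2/‖l2‖^3 + 1/(l2.re^2*‖l2‖) + 1/(l2.re*‖l2‖^2))
      + (2/‖l1‖^3 + 1/(l1.re^2*‖l1‖) + 1/(l1.re*‖l1‖^2)) * (2/‖l2‖^2 + 1/(l2.re*‖l2‖)), ?_⟩
    rintro x ⟨t, ht, rfl⟩
    have ht0 : (0:ℝ) ≤ t 0 := ht 0
    have ht1 : (0:ℝ) ≤ t 1 := ht 1
    have hrw : mLapPartial 2 f ![l1,l2] t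
        = (∫ s in Set.Ioc (0:ℝ) (t 0), Complex.exp (-(l1*s)) * (s:ℂ))
            * (∫ s in Set.Ioc (0:ℝ) (t 1), Complex.exp (-(l2*s)) * ((s:ℂ)^2/2))
          - (∫ s in Set.Ioc (0:ℝ) (t 0), Complex.exp (-(l1*s)) * ((s:ℂ)^2/2))
            * (∫ s in Set.Ioc (0:ℝ) (t 1), Complex.exp (-(l2*s)) * (s:ℂ)) := by
      unfold mLapPartial
      simp only [hf]
      exact mLap_eq l1 l2 t
    rw [hrw]
    have nA1 := normA_le l1 h1 ht0
    have nB2 := normB_le l2 h2 ht1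
    have nB1 := normB_le l1 h1 ht0
    have nA2 := normA_le l2 h2 ht1
    refine (norm_sub_le _ _).trans ?_
    rw [norm_mul, norm_mul]
    have c1 := mul_le_mul nA1 nB2 (norm_nonneg _) ((norm_nonneg _).trans nA1)
    have c2 := mul_le_mul nB1 nA2 (norm_nonneg _) ((norm_nonneg _).trans nB1)
    linarith
  have hne : ¬ (∀ᵐ t : Fin 2 → ℝ, (∀ i, 0 ≤ t i) → f t = 0) := by
    intro h
    rw [ae_iff] at h
    have hsub : Set.pi Set.univ ![Set.Ioo (1:ℝ) 2, Set.Ioo (3:ℝ) 4]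
        ⊆ {a : Fin 2 → ℝ | ¬((∀ i, 0 ≤ a i) → f a = 0)} := by
      intro x hx
      have hx0 : x 0 ∈ Set.Ioo (1:ℝ) 2 := by simpa using hx 0 (mem_univ _)
      have hx1 : x 1 ∈ Set.Ioo (3:ℝ) 4 := by simpa using hx 1 (mem_univ _)
      intro himp
      have hpos : ∀ i, 0 ≤ x i := by
        intro i; fin_cases i
        · exact le_of_lt (lt_trans one_pos hx0.1)
        · exact le_of_lt (lt_trans (by norm_num) hx1.1)
      have h0 := himp hpos
      rw [hf, Complex.ofReal_eq_zero] at h0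
      obtain ⟨a1, a2⟩ := hx0
      obtain ⟨b1, b2⟩ := hx1
      have h2 : x 0 * x 1 * (x 1 - x 0) = 0 := by linear_combination 2*h0
      have p : 0 < x 0 * x 1 * (x 1 - x 0) :=
        mul_pos (mul_pos (by linarith) (by linarith)) (by linarith)
      exact p.ne' h2
    have hvol : volume (Set.pi Set.univ ![Set.Ioo (1:ℝ) 2, Set.Ioo (3:ℝ) 4]) = 1 := by
      rw [volume_pi_pi]
      rw [Fin.prod_univ_two]
      simp [Real.volume_Ioo]
      norm_num
    have hle := measure_mono (μ := (volume : Measure (Fin 2 → ℝ))) hsub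
    rw [hvol, h] at hle
    simp at hle
  refine ⟨hmain, hne, ?_⟩
  intro hU
  have hcont : Continuous f := by
    have hfe : f = fun t : Fin 2 → ℝ => (((t 0) * (t 1)^2/2 - (t 0)^2/2*(t 1) : ℝ):ℂ) :=
      funext hf
    rw [hfe]
    exact Complex.continuous_ofReal.comp
      ((((continuous_apply 0).mul ((continuous_apply 1).pow 2)).div_const 2).sub
        ((((continuous_apply 0).pow 2).div_const 2).mul (continuous_apply 1)))
  have hloc : MeasureTheory.LocallyIntegrableOn f {t : Fin 2 → ℝ | ∀ i, 0 ≤ t i} :=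
    (hcont.locallyIntegrable).locallyIntegrableOn _
  have hzero : ∀ k : ℕ, HasMLaplace 2 f (fun _ : Fin 2 => ((k:ℂ)+1)) 0 := by
    intro k
    have hre : (0:ℝ) < ((k:ℂ)+1).re := by
      simp [Complex.add_re]
      positivity
    have h := hmain ((k:ℂ)+1) ((k:ℂ)+1) hre hre
    rw [sub_self, zero_div] at h
    have heq : (fun _ : Fin 2 => ((k:ℂ)+1)) = ![(k:ℂ)+1, (k:ℂ)+1] := by
      funext i; fin_cases i <;> rfl
    rwa [heq]
  have hsubset : {l : Fin 2 → ℂ | ∀ j, (fun _ : Fin 2 => (0:EReal)) j < (((l j).re : ℝ) : EReal)}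
      ⊆ mOmegaB 2 f ∩ mOmega 2 f := by
    intro l hl
    have h0 : 0 < (l 0).re := EReal.coe_pos.mp (hl 0)
    have h1 : 0 < (l 1).re := EReal.coe_pos.mp (hl 1)
    have hl' : l = ![l 0, l 1] := by funext i; fin_cases i <;> rfl
    constructor
    · have := hbdd (l 0) (l 1) h0 h1
      rw [← hl'] at this
      exact this
    · refine ⟨(l 0 - l 1)/((l 0)^3*(l 1)^3), ?_⟩
      have := hmain (l 0) (l 1) h0 h1
      rwa [← hl'] at this
  have key := hU f hloc ⟨fun _ => (0:EReal), fun j => by simp, hsubset, ?_⟩ hzero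
  · exact hne key
  · intro k j
    have hre : (0:ℝ) < ((k:ℂ)+1).re := by
      simp [Complex.add_re]
      positivity
    exact EReal.coe_pos.mpr hre

end
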